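/- Let q = 2^r with r a positive integer, let β ∈ 𝔽_q^*, and let a ∈ 𝔽_q be such that the polynomial x² + x + a is irreducible over 𝔽_q (equivalently, a is not of the form α² + α for any α ∈ 𝔽_q). Then Σ_{α ∈ 𝔽_q} λ(β/(α² + α + a)) = −K(λ;β) − 1. -/
import Mathlib


open Finset Matrix

/-- The quadratic form `θ⁺(x) = ∑ i, x_i x_{n+i}` on `F^{2n}` (columns indexed by `Fin n ⊕ Fin n`). -/
def thetaPlus (F : Type) [Field F] (n : ℕ) (x : Fin n ⊕ Fin n → F) : F :=
  ∑ i : Fin n, x (Sum.inl i) * x (Sum.inr i)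

/-- The orthogonal group `O⁺(2n,q)`: invertible matrices preserving `θ⁺`. -/
noncomputable def OplusGrp (F : Type) [Field F] [Fintype F] [DecidableEq F] (n : ℕ) :
    Finset (Matrix (Fin n ⊕ Fin n) (Fin n ⊕ Fin n) F) := by
  classical
  exact Finset.univ.filter (fun w => IsUnit w ∧
    ∀ x : Fin n ⊕ Fin n → F, thetaPlus F n (w.mulVec x) = thetaPlus F n x)

/-- `SO⁺(2n,q)`: the kernel of `δ⁺(w) = Tr(B ᵗC)` on `O⁺(2n,q)`,
where `w = [[A,B],[C,D]]` in `n × n` blocks. -/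
noncomputable def SOplusGrp (F : Type) [Field F] [Fintype F] [DecidableEq F] (n : ℕ) :
    Finset (Matrix (Fin n ⊕ Fin n) (Fin n ⊕ Fin n) F) := by
  classical
  exact (OplusGrp F n).filter
    (fun w => Matrix.trace (Matrix.toBlocks₁₂ w * (Matrix.toBlocks₂₁ w)ᵀ) = 0)

/-- The trace map `tr(x) = x + x² + ⋯ + x^{2^{r−1}}`, valued in `𝔽₂ = {0,1} ⊆ F`. -/
def trF (F : Type) [Field F] (r : ℕ) (x : F) : F := ∑ i ∈ Finset.range r, x ^ 2 ^ i

/-- The canonical additive character `λ(x) = (−1)^{tr(x)} ∈ {±1} ⊆ ℤ`. -/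
noncomputable def lam (F : Type) [Field F] (r : ℕ) (x : F) : ℤ := by
  classical exact if trF F r x = 0 then 1 else -1

/-- The trace map `tr` viewed as a function into `𝔽₂ = ZMod 2`. -/
noncomputable def tr2 (F : Type) [Field F] (r : ℕ) (x : F) : ZMod 2 := by
  classical exact if trF F r x = 0 then 0 else 1

/-- The Kloosterman sum `K(λ;a) = ∑_{α ∈ F*} λ(α + aα⁻¹)`. -/
noncomputable def Kl (F : Type) [Field F] [Fintype F] (r : ℕ) (a : F) : ℤ := by
  classical
  exact ∑ α ∈ Finset.univ.filter (fun α : F => α ≠ 0), lam F r (α + a * α⁻¹)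

/-- The `m`-dimensional Kloosterman sum
`K_m(λ;a) = ∑_{α₁,…,α_m ∈ F*} λ(α₁ + ⋯ + α_m + aα₁⁻¹⋯α_m⁻¹)`;
for `m = 0` this is `K₀(λ;a) = λ(a)`. -/
noncomputable def Klm (F : Type) [Field F] [Fintype F] (r m : ℕ) (a : F) : ℤ := by
  classical
  exact ∑ v ∈ Finset.univ.filter (fun v : Fin m → F => ∀ i, v i ≠ 0),
    lam F r ((∑ i, v i) + a * (∏ i, v i)⁻¹)

/-- The power moment `MK^h = ∑_{a ∈ F*} K(λ;a)^h`. -/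
noncomputable def MK (F : Type) [Field F] [Fintype F] (r h : ℕ) : ℤ := by
  classical exact ∑ a ∈ Finset.univ.filter (fun a : F => a ≠ 0), (Kl F r a) ^ h

/-- The power moment `MK₂^h = ∑_{a ∈ F*} K₂(λ;a)^h` of 2-dimensional Kloosterman sums. -/
noncomputable def MK2 (F : Type) [Field F] [Fintype F] (r h : ℕ) : ℤ := by
  classical exact ∑ a ∈ Finset.univ.filter (fun a : F => a ≠ 0), (Klm F r 2 a) ^ h

/-- The binary code `C(G) = {u ∈ 𝔽₂^G : ∑_{g ∈ G} u_g Tr(g) = 0 in F}`. -/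
noncomputable def code (F : Type) [Field F] [Fintype F] [DecidableEq F]
    {ι : Type} [Fintype ι] [DecidableEq ι] (G : Finset (Matrix ι ι F)) :
    Finset (↥G → ZMod 2) := by
  classical
  exact Finset.univ.filter
    (fun u => ∑ g : ↥G, (u g).val • Matrix.trace (g : Matrix ι ι F) = 0)

/-- Number of codewords of Hamming weight `j` in the code `C(G)`. -/
noncomputable def wtCount (F : Type) [Field F] [Fintype F] [DecidableEq F]
    {ι : Type} [Fintype ι] [DecidableEq ι] (G : Finset (Matrix ι ι F)) (j : ℕ) : ℕ := by
  classical
  exact ((code F G).filter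
    (fun u => (Finset.univ.filter (fun g : ↥G => u g = 1)).card = j)).card

/-- `t! · S(h,t)` where `S(h,t)` is the Stirling number of the second kind,
`S(h,t) = (1/t!) ∑_{j=0}^{t} (−1)^{t−j} C(t,j) j^h`. -/
def tS (h t : ℕ) : ℤ :=
  ∑ j ∈ Finset.range (t + 1), (-1 : ℤ) ^ (t - j) * (t.choose j : ℤ) * (j : ℤ) ^ h

/-- Binomial coefficient with integer arguments: `0` whenever `k < 0` or `k > n`. -/
def ichoose (n k : ℤ) : ℤ := if 0 ≤ k ∧ k ≤ n then (n.toNat.choose k.toNat : ℤ) else 0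

section aux
variable {F : Type} [Field F] [Fintype F] [DecidableEq F] {r : ℕ}

lemma char2 (hF : Fintype.card F = 2 ^ r) : CharP F 2 := by
  haveI : CharP F (ringChar F) := ringChar.charP F
  obtain ⟨n, hp, hcard⟩ := FiniteField.card F (ringChar F)
  have h2 : ringChar F = 2 := by
    have hdvd : ringChar F ∣ 2 ^ r := by
      rw [← hF, hcard]; exact dvd_pow_self _ n.ne_zero
    exact (Nat.prime_dvd_prime_iff_eq hp Nat.prime_two).mp (hp.dvd_of_dvd_pow hdvd)
  rw [← h2]; infer_instance

variable [CharP F 2]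

lemma trF_zero : trF F r 0 = 0 :=
  Finset.sum_eq_zero fun i _ => zero_pow (Nat.two_pow_pos i).ne'

lemma trF_add (x y : F) : trF F r (x + y) = trF F r x + trF F r y := by
  unfold trF
  rw [← Finset.sum_add_distrib]
  haveI := Fact.mk Nat.prime_two
  exact Finset.sum_congr rfl fun i _ => by exact add_pow_char_pow ..

lemma sum_shift (hF : Fintype.card F = 2 ^ r) (x : F) :
    ∑ i ∈ Finset.range r, (x ^ 2 ^ i) ^ 2 = trF F r x := by
  have h : ∀ i : ℕ, (x ^ 2 ^ i) ^ 2 = x ^ 2 ^ (i + 1) := by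
    intro i; rw [← pow_mul, ← pow_succ]
  simp_rw [h]
  have h1 := Finset.sum_range_succ' (fun i => x ^ 2 ^ i) r
  have h2 := Finset.sum_range_succ (fun i => x ^ 2 ^ i) r
  have h3 : x ^ 2 ^ r = x := by rw [← hF]; exact FiniteField.pow_card x
  simp only [pow_zero, pow_one] at h1 h2
  rw [h3] at h2
  unfold trF
  linear_combination h2 - h1

lemma trF_sq (hF : Fintype.card F = 2 ^ r) (x : F) : trF F r x ^ 2 = trF F r x := by
  unfold trF
  haveI := Fact.mk Nat.prime_two
  rw [sum_pow_char (p := 2)]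
  exact sum_shift hF x

lemma trF_sq_arg (hF : Fintype.card F = 2 ^ r) (x : F) : trF F r (x ^ 2) = trF F r x := by
  unfold trF
  have h : ∀ i : ℕ, (x ^ 2) ^ 2 ^ i = (x ^ 2 ^ i) ^ 2 := by
    intro i; rw [← pow_mul, ← pow_mul, mul_comm]
  simp_rw [h]
  exact sum_shift hF x

lemma trF_mem (hF : Fintype.card F = 2 ^ r) (x : F) : trF F r x = 0 ∨ trF F r x = 1 := by
  have h := trF_sq hF x
  have : trF F r x * (trF F r x - 1) = 0 := by ring_nf; linear_combination h
  rcases mul_eq_zero.mp this with h' | h'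
  · exact Or.inl h'
  · exact Or.inr (by linear_combination h')

lemma lam_add (hF : Fintype.card F = 2 ^ r) (x y : F) :
    lam F r (x + y) = lam F r x * lam F r y := by
  unfold lam
  have hxy := trF_add (r := r) x y
  have h2 : (1 : F) + 1 = 0 := by
    have := CharTwo.two_eq_zero (R := F); rwa [← one_add_one_eq_two] at this
  rcases trF_mem hF x with hx | hx <;> rcases trF_mem hF y with hy | hy
  · have h : trF F r (x + y) = 0 := by rw [hxy, hx, hy, add_zero]
    simp [hx, hy, h]
  · have h : trF F r (x + y) = 1 := by rw [hxy, hx, hy, zero_add]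
    simp [hx, hy, h]
  · have h : trF F r (x + y) = 1 := by rw [hxy, hx, hy, add_zero]
    simp [hx, hy, h]
  · have h : trF F r (x + y) = 0 := by rw [hxy, hx, hy, h2]
    simp [hx, hy, h]

lemma trF_artin (hF : Fintype.card F = 2 ^ r) (x : F) : trF F r (x ^ 2 + x) = 0 := by
  rw [trF_add, trF_sq_arg hF, CharTwo.add_self_eq_zero]

lemma trF_exists_ne (hr : 1 ≤ r) (hF : Fintype.card F = 2 ^ r) :
    ∃ y : F, trF F r y ≠ 0 := by
  by_contra h
  push_neg at h
  set p : Polynomial F := ∑ i ∈ Finset.range r, Polynomial.X ^ 2 ^ i with hp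
  have heval : ∀ y : F, p.eval y = trF F r y := by
    intro y; simp [hp, trF, Polynomial.eval_finset_sum]
  have hc1 : p.coeff 1 = 1 := by
    rw [hp, Polynomial.finset_sum_coeff]
    rw [Finset.sum_eq_single 0]
    · simp
    · intro i hi hne
      rw [Polynomial.coeff_X_pow]
      have h1 : (1 : ℕ) ≠ 2 ^ i := by
        intro he
        have : 2 ^ 1 ≤ 2 ^ i := Nat.pow_le_pow_right (by norm_num)
          (Nat.pos_of_ne_zero hne)
        omega
      simp [h1]
    · intro h0'
      exact absurd (Finset.mem_range.mpr (by omega)) h0'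
  have hpne : p ≠ 0 := by
    intro h0; rw [h0] at hc1; simp at hc1
  have hdeg : p.natDegree ≤ 2 ^ (r - 1) := by
    apply Polynomial.natDegree_sum_le_of_forall_le
    intro i hi
    rw [Polynomial.natDegree_X_pow]
    exact Nat.pow_le_pow_right (by norm_num) (by have := Finset.mem_range.mp hi; omega)
  have hroots : (Finset.univ : Finset F) ⊆ p.roots.toFinset := by
    intro y _
    rw [Multiset.mem_toFinset, Polynomial.mem_roots hpne, Polynomial.IsRoot, heval]
    exact h y
  have hcard : Fintype.card F ≤ 2 ^ (r - 1) := by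
    calc Fintype.card F = (Finset.univ : Finset F).card := rfl
      _ ≤ p.roots.toFinset.card := Finset.card_le_card hroots
      _ ≤ Multiset.card p.roots := p.roots.toFinset_card_le
      _ ≤ p.natDegree := p.card_roots'
      _ ≤ 2 ^ (r - 1) := hdeg
  rw [hF] at hcard
  have : 2 ^ (r - 1) < 2 ^ r := Nat.pow_lt_pow_right (by norm_num) (by omega)
  omega

lemma sum_lam (hr : 1 ≤ r) (hF : Fintype.card F = 2 ^ r) :
    ∑ x : F, lam F r x = 0 := by
  obtain ⟨y, hy⟩ := trF_exists_ne hr hF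
  have hly : lam F r y = -1 := by unfold lam; simp [hy]
  have hshift : ∑ x : F, lam F r x = ∑ x : F, lam F r (x + y) :=
    (Fintype.sum_bijective (· + y) (Equiv.addRight y).bijective _ _ fun x => rfl).symm
  have : ∑ x : F, lam F r x = -∑ x : F, lam F r x := by
    conv_lhs => rw [hshift]
    rw [← Finset.sum_neg_distrib]
    refine Finset.sum_congr rfl fun x _ => ?_
    rw [lam_add hF, hly]; ring
  omega

lemma fiber_card (hF : Fintype.card F = 2 ^ r) (y : F)
    (hy : y ∈ Finset.univ.image fun α : F => α ^ 2 + α) :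
    (Finset.univ.filter fun α : F => α ^ 2 + α = y).card = 2 := by
  have h2 : (2 : F) = 0 := CharTwo.two_eq_zero
  obtain ⟨α₀, -, rfl⟩ := Finset.mem_image.mp hy
  have hset : (Finset.univ.filter fun α : F => α ^ 2 + α = α₀ ^ 2 + α₀)
      = {α₀, α₀ + 1} := by
    ext α
    simp only [Finset.mem_filter, Finset.mem_univ, true_and, Finset.mem_insert,
      Finset.mem_singleton]
    constructor
    · intro h
      have hfac : (α + α₀) * (α + α₀ + 1) = 0 := by
        linear_combination h + (α * α₀ + α₀ ^ 2 + α₀) * h2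
      rcases mul_eq_zero.mp hfac with h' | h'
      · exact Or.inl (by linear_combination h' - α₀ * h2)
      · exact Or.inr (by linear_combination h' - (α₀ + 1) * h2)
    · rintro (rfl | rfl)
      · rfl
      · linear_combination (α₀ + 1) * h2
  rw [hset]
  rw [Finset.card_pair]
  intro he
  have : (1 : F) = 0 := by linear_combination -he
  exact one_ne_zero this

lemma image_eq_ker (hr : 1 ≤ r) (hF : Fintype.card F = 2 ^ r) :
    (Finset.univ.image fun α : F => α ^ 2 + α)
      = Finset.univ.filter fun y : F => trF F r y = 0 := by
  have hcard2 : 2 * (Finset.univ.image fun α : F => α ^ 2 + α).card = 2 ^ r := by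
    have := Finset.card_eq_sum_card_fiberwise
      (f := fun α : F => α ^ 2 + α) (s := Finset.univ)
      (t := Finset.univ.image fun α : F => α ^ 2 + α)
      (fun x _ => Finset.mem_image_of_mem _ (Finset.mem_univ x))
    rw [Finset.card_univ, hF] at this
    rw [this, Finset.sum_congr rfl (fun y hy => fiber_card hF y hy), Finset.sum_const,
      smul_eq_mul, mul_comm]
  have hker2 : 2 * (Finset.univ.filter fun y : F => trF F r y = 0).card = 2 ^ r := by
    have hs := sum_lam hr hF
    have hsplit : ∑ x : F, lam F r x
        = ((Finset.univ.filter fun y : F => trF F r y = 0).card : ℤ)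
          - ((Finset.univ.filter fun y : F => ¬ trF F r y = 0).card : ℤ) := by
      rw [← Finset.sum_filter_add_sum_filter_not Finset.univ
        (fun y : F => trF F r y = 0) (fun x => lam F r x)]
      have ha1 : ∑ x ∈ Finset.univ.filter (fun y : F => trF F r y = 0), lam F r x
          = ((Finset.univ.filter fun y : F => trF F r y = 0).card : ℤ) := by
        rw [Finset.sum_congr rfl (fun x hx => ?_), Finset.sum_const, nsmul_eq_mul, mul_one]
        have h0 := (Finset.mem_filter.mp hx).2
        unfold lam; simp [h0]
      have ha2 : ∑ x ∈ Finset.univ.filter (fun y : F => ¬ trF F r y = 0), lam F r x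
          = -((Finset.univ.filter fun y : F => ¬ trF F r y = 0).card : ℤ) := by
        rw [Finset.sum_congr rfl (fun x hx => ?_), Finset.sum_const, nsmul_eq_mul, mul_neg_one]
        have h0 := (Finset.mem_filter.mp hx).2
        unfold lam; simp [h0]
      rw [ha1, ha2]; ring
    have hall : (Finset.univ.filter fun y : F => trF F r y = 0).card
        + (Finset.univ.filter fun y : F => ¬ trF F r y = 0).card = 2 ^ r := by
      rw [Finset.card_filter_add_card_filter_not, Finset.card_univ, hF]
    rw [hs] at hsplit
    omega
  refine Finset.eq_of_subset_of_card_le ?_ ?_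
  · intro y hy
    obtain ⟨α, -, rfl⟩ := Finset.mem_image.mp hy
    simp [trF_artin hF]
  · omega

end aux

theorem stmt14 (r : ℕ) (hr : 1 ≤ r) (F : Type) [Field F] [Fintype F] [DecidableEq F]
    (hF : Fintype.card F = 2 ^ r) (β : F) (hβ : β ≠ 0) (a : F)
    (ha : ∀ α : F, α ^ 2 + α ≠ a) :
    ∑ α : F, lam F r (β / (α ^ 2 + α + a)) = -(Kl F r β) - 1 := by
  classical
  haveI : CharP F 2 := char2 hF
  have h2 : (2 : F) = 0 := CharTwo.two_eq_zero
  have hta : trF F r a ≠ 0 := by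
    intro h0
    have : a ∈ (Finset.univ.image fun α : F => α ^ 2 + α) := by
      rw [image_eq_ker hr hF]
      simp [h0]
    obtain ⟨α, -, hα⟩ := Finset.mem_image.mp this
    exact ha α hα
  have e1 : ∑ α : F, lam F r (β / (α ^ 2 + α + a))
      = ∑ y ∈ Finset.univ.filter (fun y : F => trF F r y = 0),
          2 * lam F r (β / (y + a)) := by
    rw [← image_eq_ker hr hF,
      Finset.sum_comp (fun y : F => lam F r (β / (y + a))) (fun α : F => α ^ 2 + α)]
    refine Finset.sum_congr rfl fun y hy => ?_
    rw [fiber_card hF y hy, nsmul_eq_mul]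
    norm_num
  have e2 : ∑ y ∈ Finset.univ.filter (fun y : F => trF F r y = 0),
        2 * lam F r (β / (y + a))
      = ∑ z ∈ Finset.univ.filter (fun z : F => trF F r z ≠ 0),
        2 * lam F r (β / z) := by
    refine Finset.sum_nbij' (fun y => y + a) (fun z => z + a) ?_ ?_ ?_ ?_ ?_
    · intro y hy
      rw [Finset.mem_filter] at hy ⊢
      refine ⟨Finset.mem_univ _, ?_⟩
      rw [trF_add, hy.2, zero_add]
      exact hta
    · intro z hz
      rw [Finset.mem_filter] at hz ⊢
      refine ⟨Finset.mem_univ _, ?_⟩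
      rw [trF_add]
      rcases trF_mem hF z with h' | h'
      · exact absurd h' hz.2
      · rcases trF_mem hF a with h'' | h''
        · exact absurd h'' hta
        · rw [h', h'']; linear_combination h2
    · intro y _
      show y + a + a = y
      rw [add_assoc, CharTwo.add_self_eq_zero, add_zero]
    · intro z _
      show z + a + a = z
      rw [add_assoc, CharTwo.add_self_eq_zero, add_zero]
    · intro y _; rfl
  have hTN : Finset.univ.filter (fun z : F => trF F r z ≠ 0)
      ⊆ Finset.univ.filter (fun z : F => z ≠ 0) := by
    intro z hz
    rw [Finset.mem_filter] at hz ⊢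
    refine ⟨Finset.mem_univ _, ?_⟩
    rintro rfl
    exact hz.2 trF_zero
  have e3a : ∑ z ∈ Finset.univ.filter (fun z : F => trF F r z ≠ 0),
        2 * lam F r (β / z)
      = ∑ z ∈ Finset.univ.filter (fun z : F => trF F r z ≠ 0),
        (1 - lam F r z) * lam F r (β / z) := by
    refine Finset.sum_congr rfl fun z hz => ?_
    have h' : trF F r z ≠ 0 := (Finset.mem_filter.mp hz).2
    have hlz : lam F r z = -1 := by unfold lam; simp [h']
    rw [hlz]; ring
  have e3b : ∑ z ∈ Finset.univ.filter (fun z : F => trF F r z ≠ 0),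
        (1 - lam F r z) * lam F r (β / z)
      = ∑ z ∈ Finset.univ.filter (fun z : F => z ≠ 0),
        (1 - lam F r z) * lam F r (β / z) := by
    refine Finset.sum_subset hTN fun z _ hz => ?_
    have h0 : trF F r z = 0 := by
      by_contra h'
      exact hz (Finset.mem_filter.mpr ⟨Finset.mem_univ _, h'⟩)
    have hlz : lam F r z = 1 := by unfold lam; simp [h0]
    rw [hlz]; ring
  have e4 : ∑ z ∈ Finset.univ.filter (fun z : F => z ≠ 0),
        (1 - lam F r z) * lam F r (β / z)
      = (∑ z ∈ Finset.univ.filter (fun z : F => z ≠ 0), lam F r (β / z))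
        - ∑ z ∈ Finset.univ.filter (fun z : F => z ≠ 0),
            lam F r z * lam F r (β / z) := by
    rw [← Finset.sum_sub_distrib]
    exact Finset.sum_congr rfl fun z _ => by ring
  have eA : ∑ z ∈ Finset.univ.filter (fun z : F => z ≠ 0), lam F r (β / z) = -1 := by
    have hbij : ∑ z ∈ Finset.univ.filter (fun z : F => z ≠ 0), lam F r (β / z)
        = ∑ w ∈ Finset.univ.filter (fun w : F => w ≠ 0), lam F r w := by
      refine Finset.sum_nbij' (fun z => β / z) (fun w => β / w) ?_ ?_ ?_ ?_ ?_
      · intro z hz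
        rw [Finset.mem_filter] at hz ⊢
        exact ⟨Finset.mem_univ _, div_ne_zero hβ hz.2⟩
      · intro w hw
        rw [Finset.mem_filter] at hw ⊢
        exact ⟨Finset.mem_univ _, div_ne_zero hβ hw.2⟩
      · intro z hz
        have hz' : z ≠ 0 := (Finset.mem_filter.mp hz).2
        show β / (β / z) = z
        field_simp
      · intro w hw
        have hw' : w ≠ 0 := (Finset.mem_filter.mp hw).2
        show β / (β / w) = w
        field_simp
      · intro z _; rfl
    rw [hbij, Finset.filter_ne', Finset.sum_erase_eq_sub (Finset.mem_univ 0),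
      sum_lam hr hF]
    have h0 : lam F r 0 = 1 := by unfold lam; simp [trF_zero]
    rw [h0]
    ring
  have eB : ∑ z ∈ Finset.univ.filter (fun z : F => z ≠ 0),
        lam F r z * lam F r (β / z) = Kl F r β := by
    unfold Kl
    refine Finset.sum_congr ?_ fun z hz => ?_
    · exact (Finset.filter_congr_decidable Finset.univ (fun α : F => α ≠ 0) _).symm
    rw [← lam_add hF, div_eq_mul_inv]
  rw [e1, e2, e3a, e3b, e4, eA, eB]
  ring
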